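/- For every ξ ∈ ℝ, the function g_ξ has a double critical point at ω = 1, i.e. g_ξ′(1) = 0 and g_ξ″(1) = 0, if and only if ξ = -(1/2)√(1+2c). -/

import Mathlib

/-- `c = a/(1+a²)`. -/
noncomputable def cOf (a : ℝ) : ℝ := a / (1 + a ^ 2)

/-- The branch of the logarithm with argument in `(-π/2, 3π/2]`:
`L(z) = Log(-iz) + iπ/2` where `Log` is the principal branch. -/
noncomputable def Lbr (z : ℂ) : ℂ :=
  Complex.log (-Complex.I * z) + Complex.I * ((Real.pi : ℂ) / 2)

/-- The branch `√(ω² + 2c) = exp((1/2)L(ω + i√(2c)) + (1/2)L(ω - i√(2c)))`. -/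
noncomputable def sqBr (a : ℝ) (ω : ℂ) : ℂ :=
  Complex.exp ((1 / 2 : ℂ) * Lbr (ω + Complex.I * (Real.sqrt (2 * cOf a) : ℂ)) +
    (1 / 2 : ℂ) * Lbr (ω - Complex.I * (Real.sqrt (2 * cOf a) : ℂ)))

/-- `G(ω) = (ω - √(ω² + 2c))/√(2c)`. -/
noncomputable def Gbr (a : ℝ) (ω : ℂ) : ℂ :=
  (ω - sqBr a ω) / (Real.sqrt (2 * cOf a) : ℂ)

/-- The branch cuts `𝒞 = i·((-∞, -1/√(2c)] ∪ [-√(2c), √(2c)] ∪ [1/√(2c), ∞))`. -/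
def cuts (a : ℝ) : Set ℂ :=
  {z : ℂ | ∃ t : ℝ, z = Complex.I * (t : ℂ) ∧
    (t ≤ -(1 / Real.sqrt (2 * cOf a)) ∨
      (-Real.sqrt (2 * cOf a) ≤ t ∧ t ≤ Real.sqrt (2 * cOf a)) ∨
      1 / Real.sqrt (2 * cOf a) ≤ t)}

/-- The branch of the logarithm with argument in `(0, 2π]`: `L₃(z) = Log(-z) + iπ`. -/
noncomputable def L3 (z : ℂ) : ℂ := Complex.log (-z) + Complex.I * (Real.pi : ℂ)

/-- The saddle point function `g_ξ(ω) = L(ω) - ξ·L(G(ω)) + ξ·L₃(G(1/ω))`. -/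
noncomputable def gxi (a ξ : ℝ) (ω : ℂ) : ℂ :=
  Lbr ω - (ξ : ℂ) * Lbr (Gbr a ω) + (ξ : ℂ) * L3 (Gbr a ω⁻¹)

/-- The saddle point equation `1 + ξ₁·ω/√(ω²+2c) + ξ₂/(ω·√(ω⁻²+2c)) = 0`. -/
def saddleEq (a ξ₁ ξ₂ : ℝ) (ω : ℂ) : Prop :=
  1 + (ξ₁ : ℂ) * ω / sqBr a ω + (ξ₂ : ℂ) / (ω * sqBr a ω⁻¹) = 0

open Complex

lemma exp_Lbr {z : ℂ} (hz : z ≠ 0) : Complex.exp (Lbr z) = z := by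
  have h1 : -Complex.I * z ≠ 0 := by simp [Complex.I_ne_zero, hz]
  rw [Lbr, Complex.exp_add, Complex.exp_log h1]
  have h2 : Complex.exp (Complex.I * ((Real.pi : ℂ) / 2)) = Complex.I := by
    rw [mul_comm, Complex.exp_mul_I]
    have : ((Real.pi : ℂ)/2) = ((Real.pi/2 : ℝ) : ℂ) := by push_cast; ring
    rw [this, ← Complex.ofReal_cos, ← Complex.ofReal_sin]
    simp
  rw [h2]
  linear_combination (-z) * Complex.I_mul_I

lemma hasDerivAt_Lbr {z : ℂ} (h : -Complex.I * z ∈ Complex.slitPlane) :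
    HasDerivAt Lbr z⁻¹ z := by
  have hz : z ≠ 0 := by
    intro h0; rw [h0, mul_zero] at h; exact Complex.zero_notMem_slitPlane h
  have h1 : HasDerivAt (fun w : ℂ => -Complex.I * w) (-Complex.I) z := by
    simpa using (hasDerivAt_id z).const_mul (-Complex.I)
  have h2 := (Complex.hasDerivAt_log h).comp z h1
  have h3 : (-Complex.I * z)⁻¹ * -Complex.I = z⁻¹ := by
    rw [mul_inv]; field_simp
  have h4 := h2.add_const (Complex.I * ((Real.pi : ℂ) / 2))
  rw [h3] at h4
  exact h4

lemma hasDerivAt_L3 {z : ℂ} (h : -z ∈ Complex.slitPlane) :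
    HasDerivAt L3 z⁻¹ z := by
  have h1 : HasDerivAt (fun w : ℂ => -w) (-1 : ℂ) z := by
    exact (hasDerivAt_id' z).neg
  have h2 := (Complex.hasDerivAt_log h).comp z h1
  have h3 : (-z)⁻¹ * (-1) = z⁻¹ := by
    have hz : z ≠ 0 := by
      intro h0; rw [h0, neg_zero] at h; exact Complex.zero_notMem_slitPlane h
    field_simp
  have h4 := h2.add_const (Complex.I * (Real.pi : ℂ))
  rw [h3] at h4
  exact h4

lemma ne_zero_of_mI_slitPlane {u : ℂ} (h : -Complex.I * u ∈ Complex.slitPlane) : u ≠ 0 := by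
  intro h0; rw [h0, mul_zero] at h; exact Complex.zero_notMem_slitPlane h

lemma sq_sqBr {a : ℝ} (hc : 0 ≤ cOf a) {ω : ℂ}
    (hu : ω + Complex.I * (Real.sqrt (2 * cOf a) : ℂ) ≠ 0)
    (hv : ω - Complex.I * (Real.sqrt (2 * cOf a) : ℂ) ≠ 0) :
    (sqBr a ω) ^ 2 = ω ^ 2 + 2 * (cOf a : ℂ) := by
  have hr2 : ((Real.sqrt (2 * cOf a) : ℂ)) ^ 2 = 2 * (cOf a : ℂ) := by
    rw [← Complex.ofReal_pow, Real.sq_sqrt (by linarith)]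
    push_cast; ring
  rw [sqBr, sq, ← Complex.exp_add]
  have : (1 / 2 : ℂ) * Lbr (ω + Complex.I * (Real.sqrt (2 * cOf a) : ℂ)) +
      (1 / 2 : ℂ) * Lbr (ω - Complex.I * (Real.sqrt (2 * cOf a) : ℂ)) +
      ((1 / 2 : ℂ) * Lbr (ω + Complex.I * (Real.sqrt (2 * cOf a) : ℂ)) +
      (1 / 2 : ℂ) * Lbr (ω - Complex.I * (Real.sqrt (2 * cOf a) : ℂ))) =
      Lbr (ω + Complex.I * (Real.sqrt (2 * cOf a) : ℂ)) +
      Lbr (ω - Complex.I * (Real.sqrt (2 * cOf a) : ℂ)) := by ring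
  rw [this, Complex.exp_add, exp_Lbr hu, exp_Lbr hv]
  linear_combination hr2 - (Real.sqrt (2 * cOf a) : ℂ)^2 * Complex.I_mul_I

lemma sqBr_ne_zero (a : ℝ) (ω : ℂ) : sqBr a ω ≠ 0 := Complex.exp_ne_zero _

lemma hasDerivAt_sqBr {a : ℝ} (hc : 0 ≤ cOf a) {ω : ℂ}
    (h3 : -Complex.I * (ω + Complex.I * (Real.sqrt (2 * cOf a) : ℂ)) ∈ Complex.slitPlane)
    (h4 : -Complex.I * (ω - Complex.I * (Real.sqrt (2 * cOf a) : ℂ)) ∈ Complex.slitPlane) :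
    HasDerivAt (sqBr a) (ω / sqBr a ω) ω := by
  set r : ℂ := (Real.sqrt (2 * cOf a) : ℂ) with hrdef
  have hu : ω + Complex.I * r ≠ 0 := ne_zero_of_mI_slitPlane h3
  have hv : ω - Complex.I * r ≠ 0 := ne_zero_of_mI_slitPlane h4
  have hU : HasDerivAt (fun w : ℂ => w + Complex.I * r) 1 ω := (hasDerivAt_id ω).add_const _
  have hV : HasDerivAt (fun w : ℂ => w - Complex.I * r) 1 ω := (hasDerivAt_id ω).sub_const _
  have hLU : HasDerivAt (fun w : ℂ => Lbr (w + Complex.I * r)) ((ω + Complex.I * r)⁻¹) ω := by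
    have := (hasDerivAt_Lbr h3).comp ω hU; rw [mul_one] at this; exact this
  have hLV : HasDerivAt (fun w : ℂ => Lbr (w - Complex.I * r)) ((ω - Complex.I * r)⁻¹) ω := by
    have := (hasDerivAt_Lbr h4).comp ω hV; rw [mul_one] at this; exact this
  have hsum : HasDerivAt (fun w : ℂ => (1 / 2 : ℂ) * Lbr (w + Complex.I * r) +
      (1 / 2 : ℂ) * Lbr (w - Complex.I * r))
      ((1 / 2 : ℂ) * (ω + Complex.I * r)⁻¹ + (1 / 2 : ℂ) * (ω - Complex.I * r)⁻¹) ω :=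
    (hLU.const_mul _).add (hLV.const_mul _)
  have hexp := (Complex.hasDerivAt_exp _).comp ω hsum
  have heq : sqBr a ω * ((1 / 2 : ℂ) * (ω + Complex.I * r)⁻¹ +
      (1 / 2 : ℂ) * (ω - Complex.I * r)⁻¹) = ω / sqBr a ω := by
    have hS := sqBr_ne_zero a ω
    have hsq := sq_sqBr hc hu hv
    have huv : (ω + Complex.I * r) * (ω - Complex.I * r) = (sqBr a ω) ^ 2 := by
      rw [hsq]
      have hr2 : r ^ 2 = 2 * (cOf a : ℂ) := by
        rw [hrdef, ← Complex.ofReal_pow, Real.sq_sqrt (by linarith)]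
        push_cast; ring
      linear_combination hr2 - r ^ 2 * Complex.I_mul_I
    field_simp
    linear_combination (-2*ω) * huv
  rw [← heq]
  exact hexp

lemma sub_sqBr_ne_zero {a : ℝ} (hc : 0 < cOf a) {ω : ℂ}
    (hu : ω + Complex.I * (Real.sqrt (2 * cOf a) : ℂ) ≠ 0)
    (hv : ω - Complex.I * (Real.sqrt (2 * cOf a) : ℂ) ≠ 0) :
    ω - sqBr a ω ≠ 0 := by
  intro h
  have h1 : ω = sqBr a ω := sub_eq_zero.mp h
  have h2 := sq_sqBr hc.le hu hv
  rw [← h1] at h2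
  have h3 : ((2 * cOf a : ℝ) : ℂ) = 0 := by push_cast; linear_combination -h2
  rw [Complex.ofReal_eq_zero] at h3
  linarith

lemma hasDerivAt_Gbr {a : ℝ} (hc : 0 ≤ cOf a) {ω : ℂ}
    (h3 : -Complex.I * (ω + Complex.I * (Real.sqrt (2 * cOf a) : ℂ)) ∈ Complex.slitPlane)
    (h4 : -Complex.I * (ω - Complex.I * (Real.sqrt (2 * cOf a) : ℂ)) ∈ Complex.slitPlane) :
    HasDerivAt (Gbr a) ((1 - ω / sqBr a ω) / (Real.sqrt (2 * cOf a) : ℂ)) ω := by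
  have h := ((hasDerivAt_id ω).sub (hasDerivAt_sqBr hc h3 h4)).div_const
    ((Real.sqrt (2 * cOf a) : ℂ))
  exact h

lemma ratio_abstract {S r z : ℂ} (hS : S ≠ 0) (hr : r ≠ 0) (hz : z - S ≠ 0) :
    ((z - S) / r)⁻¹ * ((1 - z / S) / r) = -S⁻¹ := by
  field_simp
  ring

lemma key_ratio {a : ℝ} (hc : 0 < cOf a) {ω : ℂ}
    (hu : ω + Complex.I * (Real.sqrt (2 * cOf a) : ℂ) ≠ 0)
    (hv : ω - Complex.I * (Real.sqrt (2 * cOf a) : ℂ) ≠ 0) :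
    (Gbr a ω)⁻¹ * ((1 - ω / sqBr a ω) / (Real.sqrt (2 * cOf a) : ℂ)) = -(sqBr a ω)⁻¹ := by
  have hr : (Real.sqrt (2 * cOf a) : ℂ) ≠ 0 := by
    simp only [ne_eq, Complex.ofReal_eq_zero]
    positivity
  have hS := sqBr_ne_zero a ω
  have hz := sub_sqBr_ne_zero hc hu hv
  rw [Gbr]
  exact ratio_abstract hS hr hz

noncomputable def gxiD (a ξ : ℝ) (ω : ℂ) : ℂ :=
  ω⁻¹ + (ξ : ℂ) * (sqBr a ω)⁻¹ + (ξ : ℂ) * (ω ^ 2 * sqBr a ω⁻¹)⁻¹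

/-- All side conditions needed near `ω = 1`. -/
def Cond (a : ℝ) (ω : ℂ) : Prop :=
  ω ≠ 0 ∧ -Complex.I * ω ∈ Complex.slitPlane ∧
  -Complex.I * (ω + Complex.I * (Real.sqrt (2 * cOf a) : ℂ)) ∈ Complex.slitPlane ∧
  -Complex.I * (ω - Complex.I * (Real.sqrt (2 * cOf a) : ℂ)) ∈ Complex.slitPlane ∧
  -Complex.I * (ω⁻¹ + Complex.I * (Real.sqrt (2 * cOf a) : ℂ)) ∈ Complex.slitPlane ∧
  -Complex.I * (ω⁻¹ - Complex.I * (Real.sqrt (2 * cOf a) : ℂ)) ∈ Complex.slitPlane ∧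
  -Complex.I * Gbr a ω ∈ Complex.slitPlane ∧
  -(Gbr a ω⁻¹) ∈ Complex.slitPlane

lemma hasDerivAt_gxi {a ξ : ℝ} (hc : 0 < cOf a) {ω : ℂ} (h : Cond a ω) :
    HasDerivAt (gxi a ξ) (gxiD a ξ ω) ω := by
  obtain ⟨h1, h2, h3, h4, h5, h6, h7, h8⟩ := h
  set r : ℂ := (Real.sqrt (2 * cOf a) : ℂ) with hrdef
  have hT1 : HasDerivAt Lbr ω⁻¹ ω := hasDerivAt_Lbr h2
  have hG : HasDerivAt (Gbr a) ((1 - ω / sqBr a ω) / r) ω := hasDerivAt_Gbr hc.le h3 h4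
  have hT2 : HasDerivAt (fun w => Lbr (Gbr a w))
      ((Gbr a ω)⁻¹ * ((1 - ω / sqBr a ω) / r)) ω := (hasDerivAt_Lbr h7).comp ω hG
  have hGi : HasDerivAt (Gbr a) ((1 - ω⁻¹ / sqBr a ω⁻¹) / r) ω⁻¹ := hasDerivAt_Gbr hc.le h5 h6
  have hinv : HasDerivAt (fun w : ℂ => w⁻¹) (-(ω ^ 2)⁻¹) ω := hasDerivAt_inv h1
  have hGc : HasDerivAt (fun w => Gbr a w⁻¹)
      (((1 - ω⁻¹ / sqBr a ω⁻¹) / r) * -(ω ^ 2)⁻¹) ω := hGi.comp ω hinv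
  have hT3 : HasDerivAt (fun w => L3 (Gbr a w⁻¹))
      ((Gbr a ω⁻¹)⁻¹ * (((1 - ω⁻¹ / sqBr a ω⁻¹) / r) * -(ω ^ 2)⁻¹)) ω :=
    by have := (hasDerivAt_L3 h8).comp ω hGc; exact this
  have htot := (hT1.sub (hT2.const_mul (ξ : ℂ))).add (hT3.const_mul (ξ : ℂ))
  have key1 : (Gbr a ω)⁻¹ * ((1 - ω / sqBr a ω) / r) = -(sqBr a ω)⁻¹ :=
    key_ratio hc (ne_zero_of_mI_slitPlane h3) (ne_zero_of_mI_slitPlane h4)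
  have key2 : (Gbr a ω⁻¹)⁻¹ * ((1 - ω⁻¹ / sqBr a ω⁻¹) / r) = -(sqBr a ω⁻¹)⁻¹ :=
    key_ratio hc (ne_zero_of_mI_slitPlane h5) (ne_zero_of_mI_slitPlane h6)
  have hval : ω⁻¹ - (ξ : ℂ) * ((Gbr a ω)⁻¹ * ((1 - ω / sqBr a ω) / r)) +
      (ξ : ℂ) * ((Gbr a ω⁻¹)⁻¹ * (((1 - ω⁻¹ / sqBr a ω⁻¹) / r) * -(ω ^ 2)⁻¹)) =
      gxiD a ξ ω := by
    rw [show (Gbr a ω⁻¹)⁻¹ * (((1 - ω⁻¹ / sqBr a ω⁻¹) / r) * -(ω ^ 2)⁻¹) =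
        ((Gbr a ω⁻¹)⁻¹ * ((1 - ω⁻¹ / sqBr a ω⁻¹) / r)) * -(ω ^ 2)⁻¹ by ring,
      key1, key2, gxiD, mul_inv]
    ring
  rw [← hval]
  exact htot

lemma Lbr_im_bounds {u : ℂ} (him : (-Complex.I * u).im < 0) :
    -(Real.pi / 2) < (Lbr u).im ∧ (Lbr u).im < Real.pi / 2 := by
  have harg_lt : Complex.arg (-Complex.I * u) < 0 := Complex.arg_neg_iff.mpr him
  have harg_gt : -Real.pi < Complex.arg (-Complex.I * u) := Complex.neg_pi_lt_arg _
  have him' : (Lbr u).im = Complex.arg (-Complex.I * u) + Real.pi / 2 := by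
    simp [Lbr, Complex.add_im, Complex.log_im, Complex.mul_im]
  constructor <;> (rw [him']; linarith)

lemma sqBr_one {a : ℝ} (hc : 0 < cOf a) :
    sqBr a 1 = (Real.sqrt (1 + 2 * cOf a) : ℂ) := by
  set r : ℝ := Real.sqrt (2 * cOf a) with hrdef
  have hrpos : 0 < r := Real.sqrt_pos.mpr (by linarith)
  -- the two im-conditions
  have him1 : (-Complex.I * ((1 : ℂ) + Complex.I * (r : ℂ))).im < 0 := by
    simp [Complex.mul_im, Complex.add_im, Complex.mul_re]
  have him2 : (-Complex.I * ((1 : ℂ) - Complex.I * (r : ℂ))).im < 0 := by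
    simp [Complex.mul_im, Complex.sub_im, Complex.mul_re, Complex.sub_re]
  have hb1 := Lbr_im_bounds him1
  have hb2 := Lbr_im_bounds him2
  set w : ℂ := (1 / 2 : ℂ) * Lbr ((1 : ℂ) + Complex.I * (r : ℂ)) +
    (1 / 2 : ℂ) * Lbr ((1 : ℂ) - Complex.I * (r : ℂ)) with hwdef
  have hwim : w.im = (1 / 2) * (Lbr ((1 : ℂ) + Complex.I * (r : ℂ))).im +
      (1 / 2) * (Lbr ((1 : ℂ) - Complex.I * (r : ℂ))).im := by
    simp [hwdef, Complex.add_im, Complex.mul_im]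
  have hcos : 0 < Real.cos w.im := by
    apply Real.cos_pos_of_mem_Ioo
    constructor <;> rw [hwim] <;> [linarith [hb1.1, hb2.1]; linarith [hb1.2, hb2.2]]
  have hre : 0 < (sqBr a 1).re := by
    have : sqBr a 1 = Complex.exp w := rfl
    rw [this, Complex.exp_re]
    positivity
  have hu : (1 : ℂ) + Complex.I * (r : ℂ) ≠ 0 := by
    intro h
    have := congrArg Complex.re h
    simp [Complex.add_re, Complex.mul_re] at this
  have hv : (1 : ℂ) - Complex.I * (r : ℂ) ≠ 0 := by
    intro h
    have := congrArg Complex.re h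
    simp [Complex.sub_re, Complex.mul_re] at this
  have hsq : (sqBr a 1) ^ 2 = 1 + 2 * (cOf a : ℂ) := by
    have := sq_sqBr hc.le (ω := 1) (by rw [← hrdef]; exact hu) (by rw [← hrdef]; exact hv)
    rw [this]; ring
  set t : ℝ := Real.sqrt (1 + 2 * cOf a) with htdef
  have htpos : 0 < t := Real.sqrt_pos.mpr (by linarith)
  have ht2 : ((t : ℂ)) ^ 2 = 1 + 2 * (cOf a : ℂ) := by
    rw [← Complex.ofReal_pow, htdef, Real.sq_sqrt (by linarith)]
    push_cast; ring
  have h0 : (sqBr a 1 - (t : ℂ)) * (sqBr a 1 + (t : ℂ)) = 0 := by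
    linear_combination hsq - ht2
  rcases mul_eq_zero.mp h0 with h | h
  · linear_combination h
  · exfalso
    have h1 : (sqBr a 1).re + t = 0 := by
      have h2 := congrArg Complex.re h
      simpa using h2
    linarith

lemma one_lt_sqrt_one_add {a : ℝ} (hc : 0 < cOf a) : 1 < Real.sqrt (1 + 2 * cOf a) := by
  exact (Real.lt_sqrt (by norm_num)).mpr (by nlinarith)

lemma Gbr_one {a : ℝ} (hc : 0 < cOf a) :
    Gbr a 1 = (((1 - Real.sqrt (1 + 2 * cOf a)) / Real.sqrt (2 * cOf a) : ℝ) : ℂ) := by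
  rw [Gbr, sqBr_one hc]; push_cast; ring

lemma cond_one {a : ℝ} (hc : 0 < cOf a) : Cond a 1 := by
  have hrpos : 0 < Real.sqrt (2 * cOf a) := Real.sqrt_pos.mpr (by linarith)
  have ht1 : 1 < Real.sqrt (1 + 2 * cOf a) := one_lt_sqrt_one_add hc
  have hGneg : (1 - Real.sqrt (1 + 2 * cOf a)) / Real.sqrt (2 * cOf a) < 0 :=
    div_neg_of_neg_of_pos (by linarith) hrpos
  refine ⟨one_ne_zero, ?_, ?_, ?_, ?_, ?_, ?_, ?_⟩
  · exact Or.inr (by simp)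
  · exact Or.inr (by simp [Complex.mul_im, Complex.add_im, Complex.mul_re])
  · exact Or.inr (by simp [Complex.mul_im, Complex.sub_im, Complex.mul_re, Complex.sub_re])
  · rw [inv_one]
    exact Or.inr (by simp [Complex.mul_im, Complex.add_im, Complex.mul_re])
  · rw [inv_one]
    exact Or.inr (by simp [Complex.mul_im, Complex.sub_im, Complex.mul_re, Complex.sub_re])
  · rw [Gbr_one hc]
    refine Or.inr ?_
    rw [show (-Complex.I * (((1 - Real.sqrt (1 + 2 * cOf a)) / Real.sqrt (2 * cOf a) : ℝ) : ℂ)).im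
        = -((1 - Real.sqrt (1 + 2 * cOf a)) / Real.sqrt (2 * cOf a)) by
      simp only [Complex.mul_im, Complex.neg_re, Complex.neg_im, Complex.I_re, Complex.I_im,
        Complex.ofReal_re, Complex.ofReal_im]
      ring]
    linarith
  · rw [inv_one, Gbr_one hc]
    refine Or.inl ?_
    rw [← Complex.ofReal_neg]
    simp only [Complex.ofReal_re]
    linarith [neg_pos.mpr hGneg]

lemma eventually_cond {a : ℝ} (hc : 0 < cOf a) : ∀ᶠ ω in nhds (1 : ℂ), Cond a ω := by
  have h1 := cond_one hc
  obtain ⟨_, c2, c3, c4, c5, c6, c7, c8⟩ := h1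
  set r : ℂ := (Real.sqrt (2 * cOf a) : ℂ) with hrdef
  have hslit := Complex.isOpen_slitPlane
  have hinv : ContinuousAt (fun w : ℂ => w⁻¹) 1 := continuousAt_inv₀ one_ne_zero
  have hGbrC : ContinuousAt (Gbr a) 1 := (hasDerivAt_Gbr hc.le c3 c4).differentiableAt.continuousAt
  have hGbrC' : ContinuousAt (Gbr a) (1 : ℂ)⁻¹ := by rw [inv_one]; exact hGbrC
  have e1 : ∀ᶠ ω in nhds (1 : ℂ), ω ≠ 0 := eventually_ne_nhds one_ne_zero
  have e2 : ∀ᶠ ω in nhds (1 : ℂ), -Complex.I * ω ∈ Complex.slitPlane :=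
    (continuousAt_const.mul continuousAt_id).eventually_mem (hslit.mem_nhds c2)
  have e3 : ∀ᶠ ω in nhds (1 : ℂ), -Complex.I * (ω + Complex.I * r) ∈ Complex.slitPlane :=
    (continuousAt_const.mul (continuousAt_id.add continuousAt_const)).eventually_mem
      (hslit.mem_nhds c3)
  have e4 : ∀ᶠ ω in nhds (1 : ℂ), -Complex.I * (ω - Complex.I * r) ∈ Complex.slitPlane :=
    (continuousAt_const.mul (continuousAt_id.sub continuousAt_const)).eventually_mem
      (hslit.mem_nhds c4)
  have e5 : ∀ᶠ ω in nhds (1 : ℂ), -Complex.I * (ω⁻¹ + Complex.I * r) ∈ Complex.slitPlane :=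
    (continuousAt_const.mul (hinv.add continuousAt_const)).eventually_mem (hslit.mem_nhds c5)
  have e6 : ∀ᶠ ω in nhds (1 : ℂ), -Complex.I * (ω⁻¹ - Complex.I * r) ∈ Complex.slitPlane :=
    (continuousAt_const.mul (hinv.sub continuousAt_const)).eventually_mem (hslit.mem_nhds c6)
  have e7 : ∀ᶠ ω in nhds (1 : ℂ), -Complex.I * Gbr a ω ∈ Complex.slitPlane :=
    (continuousAt_const.mul hGbrC).eventually_mem (hslit.mem_nhds c7)
  have e8 : ∀ᶠ ω in nhds (1 : ℂ), -(Gbr a ω⁻¹) ∈ Complex.slitPlane :=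
    ((hGbrC'.comp hinv).neg).eventually_mem (hslit.mem_nhds c8)
  filter_upwards [e1, e2, e3, e4, e5, e6, e7, e8] with ω p1 p2 p3 p4 p5 p6 p7 p8
  exact ⟨p1, p2, p3, p4, p5, p6, p7, p8⟩

/-- For every `ξ ∈ ℝ`, the function `g_ξ` has a double critical point at
`ω = 1`, i.e. `g_ξ′(1) = 0` and `g_ξ″(1) = 0`, if and only if `ξ = -(1/2)√(1+2c)`. -/
theorem statement11 (a : ℝ) (ha0 : 0 < a) (ha1 : a < 1) (ξ : ℝ) :
    (deriv (gxi a ξ) 1 = 0 ∧ iteratedDeriv 2 (gxi a ξ) 1 = 0) ↔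
      ξ = -(1 / 2) * Real.sqrt (1 + 2 * cOf a) := by
  have hc : 0 < cOf a := div_pos ha0 (by positivity)
  set t : ℝ := Real.sqrt (1 + 2 * cOf a) with htdef
  have htpos : 0 < t := Real.sqrt_pos.mpr (by linarith)
  have htC : (t : ℂ) ≠ 0 := by exact_mod_cast htpos.ne'
  have hcond := cond_one hc
  obtain ⟨-, c2, c3, c4, c5, c6, c7, c8⟩ := cond_one hc
  have hd1 : deriv (gxi a ξ) 1 = gxiD a ξ 1 := (hasDerivAt_gxi hc hcond).deriv
  have hval1 : gxiD a ξ 1 = 1 + 2 * (ξ : ℂ) / (t : ℂ) := by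
    rw [gxiD, inv_one, sqBr_one hc, ← htdef]
    field_simp
    ring
  have hEv : deriv (gxi a ξ) =ᶠ[nhds (1 : ℂ)] gxiD a ξ :=
    (eventually_cond hc).mono fun ω h => (hasDerivAt_gxi hc h).deriv
  have hd2 : deriv (deriv (gxi a ξ)) 1 = deriv (gxiD a ξ) 1 := hEv.deriv_eq
  -- derivative of gxiD at 1
  have hSne : sqBr a 1 ≠ 0 := sqBr_ne_zero a 1
  have hS1 : HasDerivAt (sqBr a) ((1 : ℂ) / sqBr a 1) 1 := by
    have := hasDerivAt_sqBr hc.le c3 c4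
    simpa using this
  have hS1' : HasDerivAt (sqBr a) ((1 : ℂ) / sqBr a 1) ((1 : ℂ)⁻¹) := by
    rw [inv_one]; exact hS1
  have hinv1 : HasDerivAt (fun x : ℂ => x⁻¹) (-(((1 : ℂ)) ^ 2)⁻¹) 1 := hasDerivAt_inv one_ne_zero
  have hA := hinv1
  have hB := (hS1.inv hSne).const_mul (ξ : ℂ)
  have hcomp := hS1'.comp (1 : ℂ) hinv1
  have hpow := hasDerivAt_pow 2 (1 : ℂ)
  have hmul := hpow.mul hcomp
  have hne : (1 : ℂ) ^ 2 * sqBr a (1 : ℂ)⁻¹ ≠ 0 := by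
    simp [sqBr_ne_zero]
  have hC := (hmul.inv hne).const_mul (ξ : ℂ)
  have hder : HasDerivAt (gxiD a ξ) (-(1 + 2 * (ξ : ℂ) / (t : ℂ))) 1 := by
    have h0 := (hA.add hB).add hC
    convert h0 using 1
    · rfl
    · rfl
    · rfl
    simp only [Function.comp_apply, Pi.mul_apply, inv_one, sqBr_one hc, ← htdef]
    norm_num
    field_simp
    ring
  have hiter : iteratedDeriv 2 (gxi a ξ) 1 = -(1 + 2 * (ξ : ℂ) / (t : ℂ)) := by
    rw [show (2 : ℕ) = 1 + 1 from rfl, iteratedDeriv_succ, iteratedDeriv_one, hd2, hder.deriv]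
  rw [hd1, hval1, hiter]
  constructor
  · rintro ⟨h1, -⟩
    have h2 : ((t + 2 * ξ : ℝ) : ℂ) = 0 := by
      push_cast
      field_simp at h1
      linear_combination h1
    have h3 : t + 2 * ξ = 0 := by exact_mod_cast h2
    linarith
  · intro h
    have h1 : (1 : ℂ) + 2 * (ξ : ℂ) / (t : ℂ) = 0 := by
      rw [h]
      push_cast
      field_simp
      norm_num
    exact ⟨h1, by rw [h1]; simp⟩
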